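/- arXiv:1404.4301 — 2 statements merged into one kernel-verified Lean document; each statement's English description precedes it below -/
import Mathlib

section
/- Let V be a closed monoidal category and S a tensor-closed V-module. For each K, X, Y the morphism ϕ̲_{K,X,Y} : 𝒮(K⊗X,Y) → [K,𝒮(X,Y)] characterized by π ∘ φ = V(L,ϕ̲) ∘ φ ∘ a* (for all L) is inverse to the composite [K,𝒮(X,Y)] → 𝒮(K⊗X, 𝒮(X,Y)⊗X) → 𝒮(K⊗X,Y) given by (−⊗X)_{K,𝒮(X,Y)} followed by 𝒮(1, ε_Y). -/
open CategoryTheory Category MonoidalCategory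

/-- A tensor-closed left `V`-module (Hovey): a left `V`-module `S` (action
`act : V ⥤ S ⥤ S` with associativity `a`, unit `l` and coherence) together with
a hom bifunctor `𝒮(-,-) : Sᵒᵖ × S ⥤ V` (given by `hom`, `mapL`, `mapR`) and
natural bijections `φ_{K,X,Y} : S(K⊗X, Y) ≅ V(K, 𝒮(X,Y))`. -/
structure TensorClosedVModule (V : Type*) [Category V] [MonoidalCategory V]
    (S : Type*) [Category S] where
  act : V ⥤ S ⥤ S
  assoc : ∀ (K L : V) (X : S),
    (act.obj (K ⊗ L)).obj X ≅ (act.obj K).obj ((act.obj L).obj X)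
  assoc_natural : ∀ {K K' L L' : V} {X X' : S} (u : K ⟶ K') (v : L ⟶ L') (w : X ⟶ X'),
    (act.map (u ⊗ₘ v)).app X ≫ (act.obj (K' ⊗ L')).map w ≫ (assoc K' L' X').hom
      = (assoc K L X).hom ≫ (act.map u).app ((act.obj L).obj X)
          ≫ (act.obj K').map ((act.map v).app X ≫ (act.obj L').map w)
  unit : ∀ X : S, (act.obj (𝟙_ V)).obj X ≅ X
  unit_natural : ∀ {X X' : S} (w : X ⟶ X'),
    (act.obj (𝟙_ V)).map w ≫ (unit X').hom = (unit X).hom ≫ w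
  pentagon : ∀ (K L M : V) (X : S),
    (assoc (K ⊗ L) M X).hom ≫ (assoc K L ((act.obj M).obj X)).hom
      = (act.map (α_ K L M).hom).app X ≫ (assoc K (L ⊗ M) X).hom
          ≫ (act.obj K).map (assoc L M X).hom
  triangle : ∀ (K : V) (X : S),
    (assoc K (𝟙_ V) X).hom ≫ (act.obj K).map (unit X).hom
      = (act.map (ρ_ K).hom).app X
  hom : S → S → V
  mapL : ∀ {X Y : S}, (X ⟶ Y) → ∀ Z : S, hom Y Z ⟶ hom X Z
  mapR : ∀ (X : S) {Y Z : S}, (Y ⟶ Z) → (hom X Y ⟶ hom X Z)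
  mapL_id : ∀ X Z : S, mapL (𝟙 X) Z = 𝟙 (hom X Z)
  mapR_id : ∀ X Y : S, mapR X (𝟙 Y) = 𝟙 (hom X Y)
  mapL_comp : ∀ {X Y Z : S} (f : X ⟶ Y) (g : Y ⟶ Z) (W : S),
    mapL (f ≫ g) W = mapL g W ≫ mapL f W
  mapR_comp : ∀ (X : S) {Y Z W : S} (g : Y ⟶ Z) (h : Z ⟶ W),
    mapR X (g ≫ h) = mapR X g ≫ mapR X h
  map_comm : ∀ {X Y : S} (f : X ⟶ Y) {Z W : S} (g : Z ⟶ W),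
    mapL f Z ≫ mapR X g = mapR Y g ≫ mapL f W
  φ : ∀ (K : V) (X Y : S), ((act.obj K).obj X ⟶ Y) ≃ (K ⟶ hom X Y)
  φ_natK : ∀ {K' K : V} {X Y : S} (u : K' ⟶ K) (f : (act.obj K).obj X ⟶ Y),
    φ K' X Y ((act.map u).app X ≫ f) = u ≫ φ K X Y f
  φ_natX : ∀ {K : V} {X' X Y : S} (v : X' ⟶ X) (f : (act.obj K).obj X ⟶ Y),
    φ K X' Y ((act.obj K).map v ≫ f) = φ K X Y f ≫ mapL v Y
  φ_natY : ∀ {K : V} {X Y Y' : S} (f : (act.obj K).obj X ⟶ Y) (w : Y ⟶ Y'),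
    φ K X Y' (f ≫ w) = φ K X Y f ≫ mapR X w

variable {V : Type*} [Category V] [MonoidalCategory V]
variable {S : Type*} [Category S]

/-- The counit `ε_Y : 𝒮(X,Y) ⊗ X ⟶ Y` of the adjunction `φ`. -/
noncomputable def TensorClosedVModule.ε (M : TensorClosedVModule V S) (X Y : S) :
    (M.act.obj (M.hom X Y)).obj X ⟶ Y :=
  (M.φ (M.hom X Y) X Y).symm (𝟙 (M.hom X Y))

/-- The enriched composition `b = φ(ε_Z ∘ (1 ⊗ ε_Y) ∘ a) :
𝒮(Y,Z) ⊗ 𝒮(X,Y) ⟶ 𝒮(X,Z)` of a tensor-closed `V`-module. -/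
noncomputable def TensorClosedVModule.comp (M : TensorClosedVModule V S)
    (X Y Z : S) : M.hom Y Z ⊗ M.hom X Y ⟶ M.hom X Z :=
  M.φ (M.hom Y Z ⊗ M.hom X Y) X Z
    ((M.assoc (M.hom Y Z) (M.hom X Y) X).hom
      ≫ (M.act.obj (M.hom Y Z)).map (M.ε X Y) ≫ M.ε Y Z)

/-- `φ_{X,Y} : S(X,Y) → V(I, 𝒮(X,Y))`, given by `φ_{I,X,Y} ∘ (precompose l_X)`. -/
noncomputable def TensorClosedVModule.φ' (M : TensorClosedVModule V S)
    {X Y : S} (f : X ⟶ Y) : 𝟙_ V ⟶ M.hom X Y :=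
  M.φ (𝟙_ V) X Y ((M.unit X).hom ≫ f)

/-- The enriched action `(−⊗X)_{K,L} = φ((ε_L ⊗ 1) ∘ a)`. -/
noncomputable def tensorAction (M : TensorClosedVModule V S)
    (H : V → V ⥤ V) (adj : ∀ Y : V, tensorRight Y ⊣ H Y) (X : S) (K L : V) :
    (H K).obj L ⟶ M.hom ((M.act.obj K).obj X) ((M.act.obj L).obj X) :=
  M.φ ((H K).obj L) ((M.act.obj K).obj X) ((M.act.obj L).obj X)
    ((M.assoc ((H K).obj L) K X).inv ≫ (M.act.map ((adj K).counit.app L)).app X)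

/-- Let `V` be a closed monoidal category and `S` a tensor-closed `V`-module.
The morphism `ϕ̲_{K,X,Y} : 𝒮(K⊗X,Y) ⟶ [K, 𝒮(X,Y)]` characterized by
`π ∘ φ = V(L,ϕ̲) ∘ φ ∘ a*` (for all `L`) is inverse to the composite
`[K,𝒮(X,Y)] ⟶ 𝒮(K⊗X, 𝒮(X,Y)⊗X) ⟶ 𝒮(K⊗X,Y)` given by `(−⊗X)_{K,𝒮(X,Y)}`
followed by `𝒮(1, ε_Y)`. -/
theorem phiBar_inverse (M : TensorClosedVModule V S)
    (H : V → V ⥤ V) (adj : ∀ Y : V, tensorRight Y ⊣ H Y)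
    (K : V) (X Y : S)
    (u : M.hom ((M.act.obj K).obj X) Y ⟶ (H K).obj (M.hom X Y))
    (hu : ∀ (L : V) (g : (M.act.obj L).obj ((M.act.obj K).obj X) ⟶ Y),
      (adj K).homEquiv L (M.hom X Y)
          (M.φ (L ⊗ K) X Y ((M.assoc L K X).hom ≫ g))
        = M.φ L ((M.act.obj K).obj X) Y g ≫ u) :
    u ≫ tensorAction M H adj X K (M.hom X Y)
        ≫ M.mapR ((M.act.obj K).obj X) (M.ε X Y)
      = 𝟙 (M.hom ((M.act.obj K).obj X) Y) ∧
    (tensorAction M H adj X K (M.hom X Y)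
        ≫ M.mapR ((M.act.obj K).obj X) (M.ε X Y)) ≫ u
      = 𝟙 ((H K).obj (M.hom X Y)) := by
  -- φ applied to the counit ε is the identity
  have hφε : ∀ (X' Y' : S), M.φ (M.hom X' Y') X' Y' (M.ε X' Y') = 𝟙 (M.hom X' Y') := by
    intro X' Y'
    simp [TensorClosedVModule.ε]
  -- the inverse of φ is given by composition with ε
  have φinv : ∀ {M' : V} (v : M' ⟶ M.hom X Y),
      (M.act.map v).app X ≫ M.ε X Y = (M.φ M' X Y).symm v := by
    intro M' v
    rw [Equiv.eq_symm_apply, M.φ_natK, hφε, comp_id]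
  -- the key formula for u obtained from hu at L' = 𝒮(K⊗X,Y), g = ε
  have hu' : (adj K).homEquiv (M.hom ((M.act.obj K).obj X) Y) (M.hom X Y)
      (M.φ (M.hom ((M.act.obj K).obj X) Y ⊗ K) X Y
        ((M.assoc (M.hom ((M.act.obj K).obj X) Y) K X).hom
          ≫ M.ε ((M.act.obj K).obj X) Y)) = u := by
    rw [hu _ (M.ε ((M.act.obj K).obj X) Y), hφε, id_comp]
  have hsymm : (u ⊗ₘ 𝟙 K) ≫ (adj K).counit.app (M.hom X Y)
      = M.φ (M.hom ((M.act.obj K).obj X) Y ⊗ K) X Y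
        ((M.assoc (M.hom ((M.act.obj K).obj X) Y) K X).hom
          ≫ M.ε ((M.act.obj K).obj X) Y) := by
    have h2 := congrArg ((adj K).homEquiv (M.hom ((M.act.obj K).obj X) Y)
      (M.hom X Y)).symm hu'
    rw [Equiv.symm_apply_apply] at h2
    rw [h2, Adjunction.homEquiv_counit]
    simp [tensorHom_id]
  -- naturality of assoc in the first variable
  have assoc_nat : (M.act.map (u ⊗ₘ 𝟙 K)).app X
        ≫ (M.assoc ((H K).obj (M.hom X Y)) K X).hom
      = (M.assoc (M.hom ((M.act.obj K).obj X) Y) K X).hom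
        ≫ (M.act.map u).app ((M.act.obj K).obj X) := by
    have h3 := M.assoc_natural u (𝟙 K) (𝟙 X)
    simpa using h3
  have assoc_nat' : (M.act.map u).app ((M.act.obj K).obj X)
        ≫ (M.assoc ((H K).obj (M.hom X Y)) K X).inv
      = (M.assoc (M.hom ((M.act.obj K).obj X) Y) K X).inv
        ≫ (M.act.map (u ⊗ₘ 𝟙 K)).app X := by
    rw [Iso.comp_inv_eq, assoc, assoc_nat, Iso.inv_hom_id_assoc]
  -- the composite c, in φ-form
  have hc : tensorAction M H adj X K (M.hom X Y)
        ≫ M.mapR ((M.act.obj K).obj X) (M.ε X Y)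
      = M.φ ((H K).obj (M.hom X Y)) ((M.act.obj K).obj X) Y
          (((M.assoc ((H K).obj (M.hom X Y)) K X).inv
            ≫ (M.act.map ((adj K).counit.app (M.hom X Y))).app X) ≫ M.ε X Y) := by
    rw [M.φ_natY]
    rfl
  constructor
  · -- u ≫ c = 1
    rw [hc, ← M.φ_natK]
    have key : (M.act.map u).app ((M.act.obj K).obj X)
        ≫ ((M.assoc ((H K).obj (M.hom X Y)) K X).inv
            ≫ (M.act.map ((adj K).counit.app (M.hom X Y))).app X) ≫ M.ε X Y
        = M.ε ((M.act.obj K).obj X) Y := by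
      rw [← assoc, ← assoc, assoc_nat', assoc, assoc]
      have hmap : (M.act.map (u ⊗ₘ 𝟙 K)).app X
            ≫ (M.act.map ((adj K).counit.app (M.hom X Y))).app X
          = (M.act.map ((u ⊗ₘ 𝟙 K) ≫ (adj K).counit.app (M.hom X Y))).app X := by
        rw [M.act.map_comp]; rfl
      rw [← assoc ((M.act.map (u ⊗ₘ 𝟙 K)).app X), hmap, hsymm, φinv,
        Equiv.symm_apply_apply, Iso.inv_hom_id_assoc]
    rw [key, hφε]
  · -- c ≫ u = 1
    rw [hc, ← hu ((H K).obj (M.hom X Y))]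
    have key2 : (M.assoc ((H K).obj (M.hom X Y)) K X).hom
        ≫ ((M.assoc ((H K).obj (M.hom X Y)) K X).inv
            ≫ (M.act.map ((adj K).counit.app (M.hom X Y))).app X) ≫ M.ε X Y
        = (M.act.map ((adj K).counit.app (M.hom X Y))).app X ≫ M.ε X Y := by
      rw [← assoc, ← assoc, Iso.hom_inv_id, id_comp]
    have hφe : M.φ ((H K).obj (M.hom X Y) ⊗ K) X Y
        ((M.act.map ((adj K).counit.app (M.hom X Y))).app X ≫ M.ε X Y)
        = (adj K).counit.app (M.hom X Y) := by
      rw [M.φ_natK]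
      simp only [Functor.id_obj]
      rw [hφε, comp_id]
    rw [key2, hφe, Adjunction.homEquiv_unit]
    exact (adj K).right_triangle_components (M.hom X Y)
end

section
/- Let V be a closed symmetric monoidal category and S a closed V-module: a tensor-closed left V-module together with a functor ⋔ : V × S^op → S^op and natural isomorphisms ψ_{K,X,Y} : S(Y, K⋔X) ≅ V(K, 𝒮(Y,X)). Then there exist unique natural isomorphisms a^op_{K,L,X} : K⋔(L⋔X) → (K⊗L)⋔X and l^op_X : X → I⋔X making S^op into a tensor-closed V-module whose V-structure is the opposite of that of S; in particular, a^op is determined by the compatibility S((L⊗K)⊗Y,X) via the braiding c and the adjunctions φ, ψ, and l^op is determined by φ ∘ l_Y^* = ψ ∘ (l^op_X)_* = φ^op. -/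
open CategoryTheory Category MonoidalCategory

variable {V : Type*} [Category V] [MonoidalCategory V]
variable {S : Type*} [Category S]

section CBAux

variable (M : TensorClosedVModule V S) {P : V → S → S}
variable (ψ : ∀ (K : V) (X Y : S), (Y ⟶ P K X) ≃ (K ⟶ M.hom Y X))

/-- The transposed adjunction `Φ : S(Y, K⋔X) ≃ S(K⊗Y, X)`. -/
noncomputable def CBPhi (K : V) (X Y : S) :
    (Y ⟶ P K X) ≃ ((M.act.obj K).obj Y ⟶ X) :=
  (ψ K X Y).trans (M.φ K Y X).symm

lemma CBPhi_symm_apply {K : V} {X Y : S} (g : (M.act.obj K).obj Y ⟶ X) :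
    (CBPhi M ψ K X Y).symm g = (ψ K X Y).symm (M.φ K Y X g) := rfl

lemma psi_eq {K : V} {X Y : S} (f : Y ⟶ P K X) :
    ψ K X Y f = M.φ K Y X (CBPhi M ψ K X Y f) :=
  ((M.φ K Y X).apply_symm_apply (ψ K X Y f)).symm

lemma CBPhi_natY
    (hY : ∀ {K : V} {X Y' Y : S} (w : Y' ⟶ Y) (f : Y ⟶ P K X),
      ψ K X Y' (w ≫ f) = ψ K X Y f ≫ M.mapL w X)
    {K : V} {X Y' Y : S} (w : Y' ⟶ Y) (f : Y ⟶ P K X) :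
    CBPhi M ψ K X Y' (w ≫ f) = (M.act.obj K).map w ≫ CBPhi M ψ K X Y f := by
  apply (M.φ K Y' X).injective
  rw [M.φ_natX, ← psi_eq, ← psi_eq]
  exact hY w f

variable {PmapV : ∀ {K L : V}, (K ⟶ L) → ∀ X : S, P L X ⟶ P K X}
variable {PmapS : ∀ (K : V) {X X' : S}, (X ⟶ X') → (P K X ⟶ P K X')}

lemma CBPhi_natV
    (hK : ∀ {K' K : V} {X Y : S} (u : K' ⟶ K) (f : Y ⟶ P K X),
      ψ K' X Y (f ≫ PmapV u X) = u ≫ ψ K X Y f)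
    {K' K : V} {X Y : S} (u : K' ⟶ K) (f : Y ⟶ P K X) :
    CBPhi M ψ K' X Y (f ≫ PmapV u X) = (M.act.map u).app Y ≫ CBPhi M ψ K X Y f := by
  apply (M.φ K' Y X).injective
  rw [M.φ_natK, ← psi_eq, ← psi_eq]
  exact hK u f

lemma CBPhi_natX
    (hX : ∀ {K : V} {X X' Y : S} (v : X ⟶ X') (f : Y ⟶ P K X),
      ψ K X' Y (f ≫ PmapS K v) = ψ K X Y f ≫ M.mapR Y v)
    {K : V} {X X' Y : S} (v : X ⟶ X') (f : Y ⟶ P K X) :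
    CBPhi M ψ K X' Y (f ≫ PmapS K v) = CBPhi M ψ K X Y f ≫ v := by
  apply (M.φ K Y X').injective
  rw [M.φ_natY, ← psi_eq, ← psi_eq]
  exact hX v f

/-- The counit of the transposed adjunction. -/
noncomputable def CBeps (K : V) (X : S) : (M.act.obj K).obj (P K X) ⟶ X :=
  CBPhi M ψ K X (P K X) (𝟙 (P K X))

lemma CBPhi_eq
    (hY : ∀ {K : V} {X Y' Y : S} (w : Y' ⟶ Y) (f : Y ⟶ P K X),
      ψ K X Y' (w ≫ f) = ψ K X Y f ≫ M.mapL w X)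
    {K : V} {X Y : S} (f : Y ⟶ P K X) :
    CBPhi M ψ K X Y f = (M.act.obj K).map f ≫ CBeps M ψ K X := by
  conv_lhs => rw [← Category.comp_id f]
  rw [CBPhi_natY M ψ hY f (𝟙 _)]
  rfl


lemma act_assoc_natX {X X' : S} (L K : V) (w : X ⟶ X') :
    (M.act.obj (L ⊗ K)).map w ≫ (M.assoc L K X').hom
      = (M.assoc L K X).hom ≫ (M.act.obj L).map ((M.act.obj K).map w) := by
  simpa using M.assoc_natural (𝟙 L) (𝟙 K) w

lemma act_assoc_natV1 {L L' : V} (u : L ⟶ L') (K : V) (X : S) :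
    (M.act.map (u ⊗ₘ 𝟙 K)).app X ≫ (M.assoc L' K X).hom
      = (M.assoc L K X).hom ≫ (M.act.map u).app ((M.act.obj K).obj X) := by
  simpa using M.assoc_natural u (𝟙 K) (𝟙 X)

lemma act_assoc_natV2 (L : V) {K K' : V} (v : K ⟶ K') (X : S) :
    (M.act.map (𝟙 L ⊗ₘ v)).app X ≫ (M.assoc L K' X).hom
      = (M.assoc L K X).hom ≫ (M.act.obj L).map ((M.act.map v).app X) := by
  simpa using M.assoc_natural (𝟙 L) v (𝟙 X)

lemma act_map_comp_app {A B C' : V} (h : A ⟶ B) (h' : B ⟶ C') (X : S) :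
    (M.act.map (h ≫ h')).app X = (M.act.map h).app X ≫ (M.act.map h').app X := by
  simp

lemma act_unit_injective {X X' : S} {f g : X ⟶ X'}
    (h : (M.act.obj (𝟙_ V)).map f = (M.act.obj (𝟙_ V)).map g) : f = g := by
  have hf := M.unit_natural f
  have hg := M.unit_natural g
  calc f = (M.unit X).inv ≫ ((M.unit X).hom ≫ f) := by simp
    _ = (M.unit X).inv ≫ ((M.act.obj (𝟙_ V)).map f ≫ (M.unit X').hom) := by rw [hf]
    _ = (M.unit X).inv ≫ ((M.act.obj (𝟙_ V)).map g ≫ (M.unit X').hom) := by rw [h]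
    _ = (M.unit X).inv ≫ ((M.unit X).hom ≫ g) := by rw [hg]
    _ = g := by simp

lemma unit_act (Z : S) :
    (M.unit ((M.act.obj (𝟙_ V)).obj Z)).hom = (M.act.obj (𝟙_ V)).map (M.unit Z).hom := by
  rw [← cancel_mono (M.unit Z).hom]
  exact (M.unit_natural (M.unit Z).hom).symm

lemma kelly (K : V) (Y : S) :
    (M.assoc (𝟙_ V) K Y).hom ≫ (M.unit ((M.act.obj K).obj Y)).hom
      = (M.act.map (λ_ K).hom).app Y := by
  apply act_unit_injective M
  have : IsIso (M.act.map (α_ (𝟙_ V) (𝟙_ V) K).hom) := inferInstance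
  rw [← cancel_epi ((M.assoc (𝟙_ V) ((𝟙_ V) ⊗ K) Y).hom),
    ← cancel_epi ((M.act.map (α_ (𝟙_ V) (𝟙_ V) K).hom).app Y)]
  calc (M.act.map (α_ (𝟙_ V) (𝟙_ V) K).hom).app Y ≫ (M.assoc (𝟙_ V) ((𝟙_ V) ⊗ K) Y).hom
        ≫ (M.act.obj (𝟙_ V)).map ((M.assoc (𝟙_ V) K Y).hom ≫ (M.unit ((M.act.obj K).obj Y)).hom)
      = ((M.act.map (α_ (𝟙_ V) (𝟙_ V) K).hom).app Y ≫ (M.assoc (𝟙_ V) ((𝟙_ V) ⊗ K) Y).hom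
          ≫ (M.act.obj (𝟙_ V)).map ((M.assoc (𝟙_ V) K Y).hom))
          ≫ (M.act.obj (𝟙_ V)).map (M.unit ((M.act.obj K).obj Y)).hom := by
        simp [Functor.map_comp]
    _ = ((M.assoc ((𝟙_ V) ⊗ (𝟙_ V)) K Y).hom ≫ (M.assoc (𝟙_ V) (𝟙_ V) ((M.act.obj K).obj Y)).hom)
          ≫ (M.act.obj (𝟙_ V)).map (M.unit ((M.act.obj K).obj Y)).hom := by
        rw [← M.pentagon]
    _ = (M.assoc ((𝟙_ V) ⊗ (𝟙_ V)) K Y).hom ≫ (M.act.map (ρ_ (𝟙_ V)).hom).app ((M.act.obj K).obj Y) := by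
        rw [← M.triangle (𝟙_ V) ((M.act.obj K).obj Y)]; simp
    _ = (M.act.map ((ρ_ (𝟙_ V)).hom ⊗ₘ 𝟙 K)).app Y ≫ (M.assoc (𝟙_ V) K Y).hom := by
        rw [act_assoc_natV1]
    _ = (M.act.map ((α_ (𝟙_ V) (𝟙_ V) K).hom ≫ (𝟙 (𝟙_ V) ⊗ₘ (λ_ K).hom))).app Y
          ≫ (M.assoc (𝟙_ V) K Y).hom := by
        rw [id_tensorHom, tensorHom_id, MonoidalCategory.triangle]
    _ = (M.act.map (α_ (𝟙_ V) (𝟙_ V) K).hom).app Y ≫ (M.assoc (𝟙_ V) ((𝟙_ V) ⊗ K) Y).hom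
          ≫ (M.act.obj (𝟙_ V)).map ((M.act.map (λ_ K).hom).app Y) := by
        rw [act_map_comp_app]
        rw [Category.assoc, act_assoc_natV2]


lemma CBPhi_PmapV
    (hK : ∀ {K' K : V} {X Y : S} (u : K' ⟶ K) (f : Y ⟶ P K X),
      ψ K' X Y (f ≫ PmapV u X) = u ≫ ψ K X Y f)
    {K' K : V} {X : S} (u : K' ⟶ K) :
    CBPhi M ψ K' X (P K X) (PmapV u X)
      = (M.act.map u).app (P K X) ≫ CBeps M ψ K X := by
  conv_lhs => rw [← Category.id_comp (PmapV u X)]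
  rw [CBPhi_natV M ψ hK u (𝟙 _)]
  rfl

lemma CBPhi_PmapS
    (hX : ∀ {K : V} {X X' Y : S} (v : X ⟶ X') (f : Y ⟶ P K X),
      ψ K X' Y (f ≫ PmapS K v) = ψ K X Y f ≫ M.mapR Y v)
    {K : V} {X X' : S} (v : X ⟶ X') :
    CBPhi M ψ K X' (P K X) (PmapS K v) = CBeps M ψ K X ≫ v := by
  conv_lhs => rw [← Category.id_comp (PmapS K v)]
  rw [CBPhi_natX M ψ hX v (𝟙 _)]
  rfl

lemma act_hom_inv_app_assoc {A B : V} (h : A ≅ B) (X : S) {Z : S}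
    (t : (M.act.obj A).obj X ⟶ Z) :
    (M.act.map h.hom).app X ≫ (M.act.map h.inv).app X ≫ t = t := by
  rw [← Category.assoc, ← act_map_comp_app, Iso.hom_inv_id, CategoryTheory.Functor.map_id]
  simp

lemma act_inv_hom_app_assoc {A B : V} (h : A ≅ B) (X : S) {Z : S}
    (t : (M.act.obj B).obj X ⟶ Z) :
    (M.act.map h.inv).app X ≫ (M.act.map h.hom).app X ≫ t = t := by
  rw [← Category.assoc, ← act_map_comp_app, Iso.inv_hom_id, CategoryTheory.Functor.map_id]
  simp

open BraidedCategory in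
lemma braid_coh [BraidedCategory V] (K L N : V) :
    (β_ (K ⊗ L) N).hom ≫ (𝟙 N ⊗ₘ (β_ K L).hom) =
      (α_ K L N).hom ≫ (β_ K (L ⊗ N)).hom ≫ ((β_ L N).hom ⊗ₘ 𝟙 K) ≫ (α_ N L K).hom := by
  simp only [id_tensorHom, tensorHom_id, braiding_tensor_left_hom, braiding_tensor_right_hom,
    Iso.trans_hom, Iso.symm_hom, Iso.refl_hom, whiskerLeftIso_hom, whiskerRightIso_hom,
    Category.comp_id, Category.id_comp, Category.assoc, MonoidalCategory.whiskerLeft_id,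
    MonoidalCategory.id_whiskerRight, Iso.hom_inv_id_assoc]
  rw [← cancel_epi (α_ K L N).inv]
  conv_rhs => rw [yang_baxter]
  simp

variable [BraidedCategory V]

/-- The associativity map of the cotensor action. -/
noncomputable def CBaop (K L : V) (X : S) : P K (P L X) ⟶ P (K ⊗ L) X :=
  (CBPhi M ψ (K ⊗ L) X (P K (P L X))).symm
    ((M.act.map (β_ K L).hom).app (P K (P L X))
      ≫ (M.assoc L K (P K (P L X))).hom
      ≫ CBPhi M ψ L X ((M.act.obj K).obj (P K (P L X))) (CBeps M ψ K (P L X)))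

/-- The unit map of the cotensor action. -/
noncomputable def CBlop (X : S) : X ⟶ P (𝟙_ V) X :=
  (CBPhi M ψ (𝟙_ V) X X).symm (M.unit X).hom

lemma CBPhi_lop (X : S) :
    CBPhi M ψ (𝟙_ V) X X (CBlop M ψ X) = (M.unit X).hom := by
  rw [CBlop, Equiv.apply_symm_apply]

lemma CBPhi_aop_self (K L : V) (X : S) :
    CBPhi M ψ (K ⊗ L) X (P K (P L X)) (CBaop M ψ K L X)
      = (M.act.map (β_ K L).hom).app (P K (P L X))
          ≫ (M.assoc L K (P K (P L X))).hom
          ≫ CBPhi M ψ L X ((M.act.obj K).obj (P K (P L X))) (CBeps M ψ K (P L X)) := by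
  rw [CBaop, Equiv.apply_symm_apply]

lemma CBPhi_aop
    (hY : ∀ {K : V} {X Y' Y : S} (w : Y' ⟶ Y) (f : Y ⟶ P K X),
      ψ K X Y' (w ≫ f) = ψ K X Y f ≫ M.mapL w X)
    {K L : V} {X Y : S} (f : Y ⟶ P K (P L X)) :
    CBPhi M ψ (K ⊗ L) X Y (f ≫ CBaop M ψ K L X)
      = (M.act.map (β_ K L).hom).app Y ≫ (M.assoc L K Y).hom
          ≫ CBPhi M ψ L X ((M.act.obj K).obj Y) (CBPhi M ψ K (P L X) Y f) := by
  rw [CBPhi_natY M ψ hY f (CBaop M ψ K L X), CBPhi_aop_self,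
    CBPhi_eq M ψ hY (CBeps M ψ K (P L X)),
    CBPhi_eq M ψ hY (CBPhi M ψ K (P L X) Y f),
    CBPhi_eq M ψ hY f]
  rw [← Category.assoc ((M.act.obj (K ⊗ L)).map f), (M.act.map (β_ K L).hom).naturality f]
  rw [Category.assoc, ← Category.assoc ((M.act.obj (L ⊗ K)).map f), act_assoc_natX]
  simp [Functor.map_comp]

end CBAux

/-- Let `V` be a closed symmetric monoidal category and `S` a closed `V`-module in
the sense of Hovey: a tensor-closed left `V`-module together with a cotensor
functor `⋔ : V × Sᵒᵖ → Sᵒᵖ` (given by `P`, contravariant `PmapV` in the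
`V`-variable and covariant `PmapS` in the `S`-variable) and natural bijections
`ψ_{K,X,Y} : S(Y, K⋔X) ≅ V(K, 𝒮(Y,X))`.  Then there exist unique natural
isomorphisms `a^op_{K,L,X} : K⋔(L⋔X) ⟶ (K⊗L)⋔X` and `l^op_X : X ⟶ I⋔X` making
`Sᵒᵖ` into a tensor-closed `V`-module whose `V`-structure is the opposite of that
of `S`: `a^op` is determined by the compatibility with the braiding `c` and the
adjunctions `φ`, `ψ`, and `l^op` by `φ ∘ l_Y^* = ψ ∘ (l^op_X)_*`. -/
theorem closed_bimodule_exists_unique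
    [SymmetricCategory V]
    (H : V → V ⥤ V) (adj : ∀ Y : V, tensorRight Y ⊣ H Y)
    (M : TensorClosedVModule V S)
    (P : V → S → S)
    (PmapV : ∀ {K L : V}, (K ⟶ L) → ∀ X : S, P L X ⟶ P K X)
    (PmapS : ∀ (K : V) {X X' : S}, (X ⟶ X') → (P K X ⟶ P K X'))
    (PmapV_id : ∀ (K : V) (X : S), PmapV (𝟙 K) X = 𝟙 (P K X))
    (PmapS_id : ∀ (K : V) (X : S), PmapS K (𝟙 X) = 𝟙 (P K X))
    (PmapV_comp : ∀ {K L N : V} (u : K ⟶ L) (u' : L ⟶ N) (X : S),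
      PmapV (u ≫ u') X = PmapV u' X ≫ PmapV u X)
    (PmapS_comp : ∀ (K : V) {X Y Z : S} (v : X ⟶ Y) (v' : Y ⟶ Z),
      PmapS K (v ≫ v') = PmapS K v ≫ PmapS K v')
    (Pmap_comm : ∀ {K L : V} (u : K ⟶ L) {X X' : S} (v : X ⟶ X'),
      PmapV u X ≫ PmapS K v = PmapS L v ≫ PmapV u X')
    (ψ : ∀ (K : V) (X Y : S), (Y ⟶ P K X) ≃ (K ⟶ M.hom Y X))
    (ψ_natK : ∀ {K' K : V} {X Y : S} (u : K' ⟶ K) (f : Y ⟶ P K X),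
      ψ K' X Y (f ≫ PmapV u X) = u ≫ ψ K X Y f)
    (ψ_natX : ∀ {K : V} {X X' Y : S} (v : X ⟶ X') (f : Y ⟶ P K X),
      ψ K X' Y (f ≫ PmapS K v) = ψ K X Y f ≫ M.mapR Y v)
    (ψ_natY : ∀ {K : V} {X Y' Y : S} (w : Y' ⟶ Y) (f : Y ⟶ P K X),
      ψ K X Y' (w ≫ f) = ψ K X Y f ≫ M.mapL w X) :
    ∃ (aop : ∀ (K L : V) (X : S), P K (P L X) ⟶ P (K ⊗ L) X)
      (lop : ∀ X : S, X ⟶ P (𝟙_ V) X),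
      -- they are isomorphisms
      (∀ K L X, IsIso (aop K L X)) ∧ (∀ X, IsIso (lop X)) ∧
      -- naturality of `a^op`
      (∀ {K K' L L' : V} (u : K ⟶ K') (v : L ⟶ L') (X : S),
        PmapV u (P L' X) ≫ PmapS K (PmapV v X) ≫ aop K L X
          = aop K' L' X ≫ PmapV (u ⊗ₘ v) X) ∧
      (∀ (K L : V) {X X' : S} (w : X ⟶ X'),
        PmapS K (PmapS L w) ≫ aop K L X' = aop K L X ≫ PmapS (K ⊗ L) w) ∧
      -- naturality of `l^op`
      (∀ {X X' : S} (w : X ⟶ X'), w ≫ lop X' = lop X ≫ PmapS (𝟙_ V) w) ∧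
      -- the dual pentagon axiom
      (∀ (K L N : V) (X : S),
        aop K L (P N X) ≫ aop (K ⊗ L) N X
          = PmapS K (aop L N X) ≫ aop K (L ⊗ N) X ≫ PmapV (α_ K L N).hom X) ∧
      -- the dual triangle axiom
      (∀ (K : V) (X : S),
        PmapV (ρ_ K).hom X = PmapS K (lop X) ≫ aop K (𝟙_ V) X) ∧
      -- `a^op` is determined by the braiding and the adjunctions `φ`, `ψ`
      (∀ (K L : V) (X Y : S) (g : (M.act.obj L).obj ((M.act.obj K).obj Y) ⟶ X),
        (ψ K (P L X) Y).symm
            (M.φ K Y (P L X)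
              ((ψ L X ((M.act.obj K).obj Y)).symm
                (M.φ L ((M.act.obj K).obj Y) X g)))
          ≫ aop K L X
        = (ψ (K ⊗ L) X Y).symm
            (M.φ (K ⊗ L) Y X
              ((M.act.map (β_ K L).hom).app Y ≫ (M.assoc L K Y).hom ≫ g))) ∧
      -- `l^op` is determined by `φ ∘ l_Y^* = ψ ∘ (l^op_X)_*`
      (∀ (X Y : S) (f : Y ⟶ X),
        M.φ (𝟙_ V) Y X ((M.unit Y).hom ≫ f) = ψ (𝟙_ V) X Y (f ≫ lop X)) ∧
      -- uniqueness
      (∀ (aop' : ∀ (K L : V) (X : S), P K (P L X) ⟶ P (K ⊗ L) X)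
         (lop' : ∀ X : S, X ⟶ P (𝟙_ V) X),
        ((∀ (K L : V) (X Y : S) (g : (M.act.obj L).obj ((M.act.obj K).obj Y) ⟶ X),
            (ψ K (P L X) Y).symm
                (M.φ K Y (P L X)
                  ((ψ L X ((M.act.obj K).obj Y)).symm
                    (M.φ L ((M.act.obj K).obj Y) X g)))
              ≫ aop' K L X
            = (ψ (K ⊗ L) X Y).symm
                (M.φ (K ⊗ L) Y X
                  ((M.act.map (β_ K L).hom).app Y ≫ (M.assoc L K Y).hom ≫ g))) ∧
         (∀ (X Y : S) (f : Y ⟶ X),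
            M.φ (𝟙_ V) Y X ((M.unit Y).hom ≫ f) = ψ (𝟙_ V) X Y (f ≫ lop' X))) →
        (∀ K L X, aop' K L X = aop K L X) ∧ (∀ X, lop' X = lop X)) := by
  have hdet : ∀ (K L : V) (X Y : S) (g : (M.act.obj L).obj ((M.act.obj K).obj Y) ⟶ X),
      (ψ K (P L X) Y).symm
          (M.φ K Y (P L X)
            ((ψ L X ((M.act.obj K).obj Y)).symm
              (M.φ L ((M.act.obj K).obj Y) X g)))
        ≫ CBaop M ψ K L X
      = (ψ (K ⊗ L) X Y).symm
          (M.φ (K ⊗ L) Y X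
            ((M.act.map (β_ K L).hom).app Y ≫ (M.assoc L K Y).hom ≫ g)) := by
    intro K L X Y g
    rw [← CBPhi_symm_apply, ← CBPhi_symm_apply, ← CBPhi_symm_apply]
    apply (CBPhi M ψ (K ⊗ L) X Y).injective
    rw [Equiv.apply_symm_apply, CBPhi_aop M ψ ψ_natY, Equiv.apply_symm_apply,
      Equiv.apply_symm_apply]
  have hldet : ∀ (X Y : S) (f : Y ⟶ X),
      M.φ (𝟙_ V) Y X ((M.unit Y).hom ≫ f) = ψ (𝟙_ V) X Y (f ≫ CBlop M ψ X) := by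
    intro X Y f
    rw [psi_eq M ψ, CBPhi_natY M ψ ψ_natY f (CBlop M ψ X), CBPhi_lop, M.unit_natural f]
  refine ⟨CBaop M ψ, CBlop M ψ, ?_, ?_, ?_, ?_, ?_, ?_, ?_, hdet, hldet, ?_⟩
  · -- aop is iso
    intro K L X
    refine ⟨(CBPhi M ψ K (P L X) (P (K ⊗ L) X)).symm
      ((CBPhi M ψ L X ((M.act.obj K).obj (P (K ⊗ L) X))).symm
        ((M.assoc L K (P (K ⊗ L) X)).inv
          ≫ (M.act.map (β_ K L).inv).app (P (K ⊗ L) X) ≫ CBeps M ψ (K ⊗ L) X)),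
      ?_, ?_⟩
    · -- aop ≫ inv = 𝟙
      apply (CBPhi M ψ K (P L X) (P K (P L X))).injective
      apply (CBPhi M ψ L X ((M.act.obj K).obj (P K (P L X)))).injective
      rw [CBPhi_natY M ψ ψ_natY (CBaop M ψ K L X), Equiv.apply_symm_apply,
        CBPhi_natY M ψ ψ_natY ((M.act.obj K).map (CBaop M ψ K L X)), Equiv.apply_symm_apply]
      have h1 : (M.act.obj L).map ((M.act.obj K).map (CBaop M ψ K L X))
          ≫ (M.assoc L K (P (K ⊗ L) X)).inv
          = (M.assoc L K (P K (P L X))).inv ≫ (M.act.obj (L ⊗ K)).map (CBaop M ψ K L X) := by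
        rw [Iso.comp_inv_eq, Category.assoc, act_assoc_natX, ← Category.assoc,
          Iso.inv_hom_id, Category.id_comp]
      rw [← Category.assoc, h1, Category.assoc]
      rw [reassoc_of% (M.act.map (β_ K L).inv).naturality (CBaop M ψ K L X)]
      have h2 : (M.act.obj (K ⊗ L)).map (CBaop M ψ K L X) ≫ CBeps M ψ (K ⊗ L) X
          = CBPhi M ψ (K ⊗ L) X (P K (P L X)) (CBaop M ψ K L X) :=
        (CBPhi_eq M ψ ψ_natY (CBaop M ψ K L X)).symm
      rw [h2, CBPhi_aop_self, act_inv_hom_app_assoc M (β_ K L), Iso.inv_hom_id_assoc]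
      rfl
    · -- inv ≫ aop = 𝟙
      apply (CBPhi M ψ (K ⊗ L) X (P (K ⊗ L) X)).injective
      rw [CBPhi_aop M ψ ψ_natY, Equiv.apply_symm_apply, Equiv.apply_symm_apply]
      rw [Iso.hom_inv_id_assoc, act_hom_inv_app_assoc M (β_ K L)]
      rfl
  · -- lop is iso
    intro X
    refine ⟨(M.unit (P (𝟙_ V) X)).inv ≫ CBeps M ψ (𝟙_ V) X, ?_, ?_⟩
    · -- lop ≫ linv = 𝟙
      have h1 : CBlop M ψ X ≫ (M.unit (P (𝟙_ V) X)).inv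
          = (M.unit X).inv ≫ (M.act.obj (𝟙_ V)).map (CBlop M ψ X) := by
        rw [Iso.comp_inv_eq, Category.assoc, M.unit_natural (CBlop M ψ X),
          ← Category.assoc, Iso.inv_hom_id, Category.id_comp]
      rw [← Category.assoc, h1, Category.assoc]
      have h2 : (M.act.obj (𝟙_ V)).map (CBlop M ψ X) ≫ CBeps M ψ (𝟙_ V) X
          = (M.unit X).hom := by
        rw [← CBPhi_eq M ψ ψ_natY (CBlop M ψ X), CBPhi_lop]
      rw [h2, Iso.inv_hom_id]
    · -- linv ≫ lop = 𝟙
      apply (CBPhi M ψ (𝟙_ V) X (P (𝟙_ V) X)).injective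
      rw [CBPhi_natY M ψ ψ_natY ((M.unit (P (𝟙_ V) X)).inv ≫ CBeps M ψ (𝟙_ V) X)
        (CBlop M ψ X), CBPhi_lop]
      rw [CategoryTheory.Functor.map_comp, Category.assoc,
        M.unit_natural (CBeps M ψ (𝟙_ V) X)]
      rw [unit_act M (P (𝟙_ V) X), ← Category.assoc, ← CategoryTheory.Functor.map_comp,
        Iso.inv_hom_id, CategoryTheory.Functor.map_id, Category.id_comp]
      rfl
  · -- naturality of aop in V
    intro K K' L L' u v X
    apply (CBPhi M ψ (K ⊗ L) X (P K' (P L' X))).injective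
    rw [← Category.assoc, CBPhi_aop M ψ ψ_natY, CBPhi_natX M ψ ψ_natX,
      CBPhi_PmapV M ψ ψ_natK, CBPhi_natV M ψ ψ_natK, CBPhi_natV M ψ ψ_natK,
      CBPhi_aop_self]
    rw [CBPhi_natY M ψ ψ_natY ((M.act.map u).app (P K' (P L' X))) (CBeps M ψ K' (P L' X)),
      CBPhi_eq M ψ ψ_natY (CBeps M ψ K' (P L' X))]
    have f1 : (M.act.map (u ⊗ₘ v)).app (P K' (P L' X)) ≫ (M.act.map (β_ K' L').hom).app (P K' (P L' X))
        = (M.act.map (β_ K L).hom).app (P K' (P L' X)) ≫ (M.act.map (v ⊗ₘ u)).app (P K' (P L' X)) := by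
      rw [← act_map_comp_app, ← act_map_comp_app, BraidedCategory.braiding_naturality]
    have f2 : (M.act.map (v ⊗ₘ u)).app (P K' (P L' X)) ≫ (M.assoc L' K' (P K' (P L' X))).hom
        = (M.assoc L K (P K' (P L' X))).hom
          ≫ (M.act.map v).app ((M.act.obj K).obj (P K' (P L' X)))
          ≫ (M.act.obj L').map ((M.act.map u).app (P K' (P L' X))) := by
      simpa using M.assoc_natural v u (𝟙 (P K' (P L' X)))
    rw [← Category.assoc ((M.act.map (u ⊗ₘ v)).app (P K' (P L' X))), f1, Category.assoc,
      ← Category.assoc ((M.act.map (v ⊗ₘ u)).app (P K' (P L' X))), f2]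
    simp [Functor.map_comp]
  · -- naturality of aop in S
    intro K L X X' w
    apply (CBPhi M ψ (K ⊗ L) X' (P K (P L X))).injective
    rw [CBPhi_aop M ψ ψ_natY, CBPhi_PmapS M ψ ψ_natX,
      CBPhi_natX M ψ ψ_natX, CBPhi_natX M ψ ψ_natX, CBPhi_aop_self]
    simp only [Category.assoc]
  · -- naturality of lop
    intro X X' w
    apply (CBPhi M ψ (𝟙_ V) X' X).injective
    rw [CBPhi_natY M ψ ψ_natY w (CBlop M ψ X'), CBPhi_lop,
      CBPhi_natX M ψ ψ_natX, CBPhi_lop, M.unit_natural w]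
  · -- dual pentagon
    intro K L N X
    apply (CBPhi M ψ ((K ⊗ L) ⊗ N) X (P K (P L (P N X)))).injective
    rw [CBPhi_aop M ψ ψ_natY (CBaop M ψ K L (P N X))]
    rw [show PmapS K (CBaop M ψ L N X) ≫ CBaop M ψ K (L ⊗ N) X ≫ PmapV (α_ K L N).hom X
        = (PmapS K (CBaop M ψ L N X) ≫ CBaop M ψ K (L ⊗ N) X) ≫ PmapV (α_ K L N).hom X by
      rw [Category.assoc]]
    rw [CBPhi_natV M ψ ψ_natK, CBPhi_aop M ψ ψ_natY, CBPhi_PmapS M ψ ψ_natX,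
      CBPhi_aop M ψ ψ_natY (CBeps M ψ K (P L (P N X)))]
    rw [CBPhi_aop_self M ψ K L (P N X)]
    rw [CBPhi_eq M ψ ψ_natY (CBeps M ψ K (P L (P N X))),
      CBPhi_eq M ψ ψ_natY ((M.act.obj L).map (CBeps M ψ K (P L (P N X))) ≫ CBeps M ψ L (P N X))]
    rw [CBPhi_eq M ψ ψ_natY ((M.act.map (β_ K L).hom).app (P K (P L (P N X)))
      ≫ (M.assoc L K (P K (P L (P N X)))).hom
      ≫ ((M.act.obj L).map (CBeps M ψ K (P L (P N X))) ≫ CBeps M ψ L (P N X)))]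
    -- now a pure diagram chase
    have f3 : (M.assoc N (K ⊗ L) (P K (P L (P N X)))).hom
        ≫ (M.act.obj N).map ((M.act.map (β_ K L).hom).app (P K (P L (P N X))))
        = (M.act.map (𝟙 N ⊗ₘ (β_ K L).hom)).app (P K (P L (P N X)))
          ≫ (M.assoc N (L ⊗ K) (P K (P L (P N X)))).hom := by
      rw [act_assoc_natV2]
    have f4 : (M.assoc (L ⊗ N) K (P K (P L (P N X)))).hom
        ≫ (M.act.map (β_ L N).hom).app ((M.act.obj K).obj (P K (P L (P N X))))
        = (M.act.map ((β_ L N).hom ⊗ₘ 𝟙 K)).app (P K (P L (P N X)))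
          ≫ (M.assoc (N ⊗ L) K (P K (P L (P N X)))).hom := by
      rw [act_assoc_natV1]
    have f5 := M.pentagon N L K (P K (P L (P N X)))
    simp only [Functor.map_comp, Category.assoc]
    rw [← Category.assoc ((M.assoc N (K ⊗ L) (P K (P L (P N X)))).hom), f3]
    rw [← Category.assoc ((M.assoc (L ⊗ N) K (P K (P L (P N X)))).hom), f4]
    simp only [Category.assoc]
    rw [reassoc_of% f5]
    rw [← Category.assoc ((M.act.map (β_ (K ⊗ L) N).hom).app (P K (P L (P N X)))),
      ← act_map_comp_app]
    rw [← Category.assoc ((M.act.map ((β_ L N).hom ⊗ₘ 𝟙 K)).app (P K (P L (P N X)))),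
      ← act_map_comp_app]
    rw [← Category.assoc ((M.act.map (β_ K (L ⊗ N)).hom).app (P K (P L (P N X)))),
      ← act_map_comp_app]
    rw [← Category.assoc ((M.act.map (α_ K L N).hom).app (P K (P L (P N X)))),
      ← act_map_comp_app]
    rw [braid_coh]
  · -- dual triangle
    intro K X
    apply (CBPhi M ψ (K ⊗ 𝟙_ V) X (P K X)).injective
    rw [show PmapV (ρ_ K).hom X = 𝟙 (P K X) ≫ PmapV (ρ_ K).hom X by rw [Category.id_comp]]
    rw [CBPhi_natV M ψ ψ_natK, CBPhi_aop M ψ ψ_natY, CBPhi_PmapS M ψ ψ_natX]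
    rw [CBPhi_natY M ψ ψ_natY (CBeps M ψ K X) (CBlop M ψ X), CBPhi_lop]
    rw [M.unit_natural (CBeps M ψ K X)]
    rw [← Category.assoc ((M.assoc (𝟙_ V) K (P K X)).hom), kelly]
    rw [← Category.assoc, ← act_map_comp_app, braiding_leftUnitor]
    rfl
  · -- uniqueness
    rintro aop' lop' ⟨h1, h2⟩
    constructor
    · intro K L X
      have e1 := h1 K L X (P K (P L X))
        (CBPhi M ψ L X ((M.act.obj K).obj (P K (P L X))) (CBeps M ψ K (P L X)))
      have e2 := hdet K L X (P K (P L X))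
        (CBPhi M ψ L X ((M.act.obj K).obj (P K (P L X))) (CBeps M ψ K (P L X)))
      rw [← e2] at e1
      have hid : (ψ K (P L X) (P K (P L X))).symm
          (M.φ K (P K (P L X)) (P L X)
            ((ψ L X ((M.act.obj K).obj (P K (P L X)))).symm
              (M.φ L ((M.act.obj K).obj (P K (P L X))) X
                (CBPhi M ψ L X ((M.act.obj K).obj (P K (P L X))) (CBeps M ψ K (P L X))))))
          = 𝟙 (P K (P L X)) := by
        rw [← CBPhi_symm_apply, ← CBPhi_symm_apply, Equiv.symm_apply_apply]
        exact (CBPhi M ψ K (P L X) (P K (P L X))).symm_apply_apply (𝟙 _)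
      rw [hid, Category.id_comp, Category.id_comp] at e1
      exact e1
    · intro X
      have e1 := h2 X X (𝟙 X)
      have e2 := hldet X X (𝟙 X)
      rw [e2] at e1
      have := (ψ (𝟙_ V) X X).injective e1.symm
      rwa [Category.id_comp, Category.id_comp] at this
end
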